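/- For p ∈ (1, 2], the space ℓ_p^d (ℝ^d with the ℓ_p norm) is 2-uniformly convex with constant p - 1: for all x, y ∈ ℝ^d, ‖(x+y)/2‖_p² + (p-1)‖(x-y)/2‖_p² ≤ (‖x‖_p² + ‖y‖_p²)/2. -/

import Mathlib

open Real Set


lemma bcl_cont {q : ℝ} (hq : 0 < q) :
    ContinuousOn (fun t : ℝ => (1+t) ^ q - (1-t) ^ q) (Icc (0:ℝ) 1) := by
  intro t _
  apply ContinuousWithinAt.sub
  · exact ((Real.continuousAt_rpow_const _ _ (Or.inr hq.le)).comp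
      (by continuity : Continuous fun t : ℝ => 1 + t).continuousAt).continuousWithinAt
  · exact ((Real.continuousAt_rpow_const _ _ (Or.inr hq.le)).comp
      (by continuity : Continuous fun t : ℝ => 1 - t).continuousAt).continuousWithinAt

lemma bcl_aux1 {p : ℝ} (hp : 1 < p) (hp2 : p ≤ 2) {t : ℝ} (ht0 : 0 ≤ t) (ht1 : t ≤ 1) :
    2*(p-1)*t ≤ (1+t) ^ (p-1) - (1-t) ^ (p-1) := by
  set f : ℝ → ℝ := fun t => (1+t) ^ (p-1) - (1-t) ^ (p-1) - 2*(p-1)*t with hf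
  have hq : (0:ℝ) < p - 1 := by linarith
  have hderiv : ∀ s ∈ Ioo (0:ℝ) 1, HasDerivAt f
      ((p-1)*(1+s)^(p-2) + (p-1)*(1-s)^(p-2) - 2*(p-1)) s := by
    intro s hs
    have h1 : (0:ℝ) < 1 + s := by linarith [hs.1]
    have h2 : (0:ℝ) < 1 - s := by linarith [hs.2]
    have d1 : HasDerivAt (fun t : ℝ => (1+t) ^ (p-1)) (1*(p-1)*(1+s)^(p-1-1)) s := by
      exact HasDerivAt.rpow_const (f := fun t : ℝ => 1+t) (f' := 1)
        (by simpa using ((hasDerivAt_id s).const_add (1:ℝ))) (Or.inl h1.ne')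
    have d2 : HasDerivAt (fun t : ℝ => (1-t) ^ (p-1)) ((-1)*(p-1)*(1-s)^(p-1-1)) s := by
      exact HasDerivAt.rpow_const (f := fun t : ℝ => 1-t) (f' := -1)
        (by exact (hasDerivAt_id s).const_sub (1:ℝ)) (Or.inl h2.ne')
    have d3 : HasDerivAt (fun t : ℝ => 2*(p-1)*t) (2*(p-1)) s := by
      simpa using (hasDerivAt_id s).const_mul (2*(p-1))
    have hd := (d1.sub d2).sub d3
    refine hd.congr_deriv ?_
    ring_nf
  have hmono : MonotoneOn f (Icc (0:ℝ) 1) := by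
    apply monotoneOn_of_deriv_nonneg (convex_Icc _ _)
    · exact ((bcl_cont hq).sub (by fun_prop)).congr (fun s _ => rfl)
    · intro s hs
      rw [interior_Icc] at hs
      exact (hderiv s hs).differentiableAt.differentiableWithinAt
    · intro s hs
      rw [interior_Icc] at hs
      rw [(hderiv s hs).deriv]
      have h1 : (0:ℝ) < 1 + s := by linarith [hs.1]
      have h2 : (0:ℝ) < 1 - s := by linarith [hs.2]
      have key : 2 ≤ (1+s)^(p-2) + (1-s)^(p-2) := by
        have hab : (1:ℝ) ≤ (1+s)^(p-2) * (1-s)^(p-2) := by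
          rw [← Real.mul_rpow h1.le h2.le]
          have hx : (1+s)*(1-s) ≤ 1 := by nlinarith [hs.1, hs.2]
          have hx0 : (0:ℝ) < (1+s)*(1-s) := mul_pos h1 h2
          exact Real.one_le_rpow_of_pos_of_le_one_of_nonpos hx0 hx (by linarith)
        have s1 : (0:ℝ) ≤ (1+s)^(p-2) := Real.rpow_nonneg h1.le _
        have s2 : (0:ℝ) ≤ (1-s)^(p-2) := Real.rpow_nonneg h2.le _
        have huv : 1 ≤ Real.sqrt ((1+s)^(p-2)) * Real.sqrt ((1-s)^(p-2)) := by
          rw [← Real.sqrt_mul s1]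
          exact (Real.le_sqrt zero_le_one (le_trans zero_le_one hab)).2 (by simpa using hab)
        nlinarith [sq_nonneg (Real.sqrt ((1+s)^(p-2)) - Real.sqrt ((1-s)^(p-2))),
          Real.sq_sqrt s1, Real.sq_sqrt s2, huv]
      nlinarith
  have h0 : f 0 ≤ f t := hmono (left_mem_Icc.2 zero_le_one) ⟨ht0, ht1⟩ ht0
  have hz : f 0 = 0 := by simp [hf]
  simp only [hf] at h0 hz
  linarith [h0, hz]
lemma bcl_aux2 {p : ℝ} (hp : 1 < p) (hp2 : p ≤ 2) {t : ℝ} (ht0 : 0 ≤ t) (ht1 : t ≤ 1) :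
    1 + p*(p-1)/2 * t^2 ≤ ((1+t) ^ p + (1-t) ^ p) / 2 := by
  set g : ℝ → ℝ := fun t => ((1+t) ^ p + (1-t) ^ p)/2 - (1 + p*(p-1)/2 * t^2) with hg
  have hp0 : (0:ℝ) < p := by linarith
  have hderiv : ∀ s ∈ Ioo (0:ℝ) 1, HasDerivAt g
      ((p*(1+s)^(p-1) - p*(1-s)^(p-1))/2 - p*(p-1)*s) s := by
    intro s hs
    have h1 : (0:ℝ) < 1 + s := by linarith [hs.1]
    have h2 : (0:ℝ) < 1 - s := by linarith [hs.2]
    have d1 : HasDerivAt (fun t : ℝ => (1+t) ^ p) (1*p*(1+s)^(p-1)) s := by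
      exact HasDerivAt.rpow_const (f := fun t : ℝ => 1+t) (f' := 1)
        (by simpa using ((hasDerivAt_id s).const_add (1:ℝ))) (Or.inl h1.ne')
    have d2 : HasDerivAt (fun t : ℝ => (1-t) ^ p) ((-1)*p*(1-s)^(p-1)) s := by
      exact HasDerivAt.rpow_const (f := fun t : ℝ => 1-t) (f' := -1)
        (by exact (hasDerivAt_id s).const_sub (1:ℝ)) (Or.inl h2.ne')
    have d3 : HasDerivAt (fun t : ℝ => 1 + p*(p-1)/2 * t^2) (p*(p-1)/2 * (2*s)) s := by
      have : HasDerivAt (fun t : ℝ => t^2) (2*s) s := by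
        simpa using (hasDerivAt_pow 2 s)
      simpa using (this.const_mul (p*(p-1)/2)).const_add 1
    have hd := ((d1.add d2).div_const 2).sub d3
    refine hd.congr_deriv ?_
    ring_nf
  have hmono : MonotoneOn g (Icc (0:ℝ) 1) := by
    apply monotoneOn_of_deriv_nonneg (convex_Icc _ _)
    · have hc : ContinuousOn (fun t : ℝ => (1+t) ^ p - (1-t) ^ p) (Icc (0:ℝ) 1) := bcl_cont hp0
      have hc2 : ContinuousOn (fun t : ℝ => (1+t) ^ p + (1-t) ^ p) (Icc (0:ℝ) 1) := by
        intro t ht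
        apply ContinuousWithinAt.add
        · exact ((Real.continuousAt_rpow_const _ _ (Or.inr hp0.le)).comp
            (by continuity : Continuous fun t : ℝ => 1 + t).continuousAt).continuousWithinAt
        · exact ((Real.continuousAt_rpow_const _ _ (Or.inr hp0.le)).comp
            (by continuity : Continuous fun t : ℝ => 1 - t).continuousAt).continuousWithinAt
      exact (hc2.div_const 2).sub (by fun_prop)
    · intro s hs
      rw [interior_Icc] at hs
      exact (hderiv s hs).differentiableAt.differentiableWithinAt
    · intro s hs
      rw [interior_Icc] at hs
      rw [(hderiv s hs).deriv]
      have key := bcl_aux1 hp hp2 hs.1.le hs.2.le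
      have : p * (2*(p-1)*s) ≤ p * ((1+s)^(p-1) - (1-s)^(p-1)) :=
        mul_le_mul_of_nonneg_left key hp0.le
      nlinarith
  have h0 : g 0 ≤ g t := hmono (left_mem_Icc.2 zero_le_one) ⟨ht0, ht1⟩ ht0
  have hz : g 0 = 0 := by simp [hg]
  simp only [hg] at h0 hz
  linarith [h0, hz]

lemma bcl_scalar_wlog {p : ℝ} (hp : 1 < p) (hp2 : p ≤ 2) {a b : ℝ}
    (hb0 : 0 ≤ b) (hba : b ≤ a) :
    (a^2 + (p-1)*b^2) ^ (p/2) ≤ ((a+b) ^ p + (a-b) ^ p) / 2 := by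
  have hp0 : (0:ℝ) < p := by linarith
  rcases eq_or_lt_of_le (hb0.trans hba) with h | ha
  · have ha0 : a = 0 := h.symm
    have hb' : b = 0 := le_antisymm (ha0 ▸ hba) hb0
    simp [ha0, hb', Real.zero_rpow (by positivity : p/2 ≠ 0),
      Real.zero_rpow hp0.ne']
  · set t := b / a with htdef
    have ht0 : 0 ≤ t := div_nonneg hb0 ha.le
    have ht1 : t ≤ 1 := (div_le_one ha).2 hba
    have hB : b = a * t := by rw [htdef, mul_div_cancel₀ _ ha.ne']
    -- LHS = a^p * (1+(p-1)t²)^(p/2)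
    have e1 : (a^2 + (p-1)*b^2) ^ (p/2) = (a^p) * (1+(p-1)*t^2) ^ (p/2) := by
      have : a^2 + (p-1)*b^2 = a^2 * (1+(p-1)*t^2) := by rw [hB]; ring
      rw [this, Real.mul_rpow (by positivity) (by nlinarith), ← Real.rpow_natCast a 2,
        ← Real.rpow_mul ha.le]
      norm_num
      exact Or.inl (by rw [show (2:ℝ)*(p/2) = p by ring])
    have e2 : (a+b) ^ p = a^p * (1+t) ^ p := by
      rw [hB, ← Real.mul_rpow ha.le (by linarith)]; ring_nf
    have e3 : (a-b) ^ p = a^p * (1-t) ^ p := by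
      rw [hB, ← Real.mul_rpow ha.le (by linarith [ht1])]; ring_nf
    rw [e1, e2, e3]
    have bern : (1+(p-1)*t^2) ^ (p/2) ≤ 1 + (p/2)*((p-1)*t^2) :=
      rpow_one_add_le_one_add_mul_self (by nlinarith) (by positivity) (by linarith)
    have key := bcl_aux2 hp hp2 ht0 ht1
    have hap : (0:ℝ) ≤ a^p := Real.rpow_nonneg ha.le _
    calc a^p * (1+(p-1)*t^2) ^ (p/2) ≤ a^p * (1 + p*(p-1)/2 * t^2) := by
          apply mul_le_mul_of_nonneg_left _ hap
          calc (1+(p-1)*t^2) ^ (p/2) ≤ 1 + (p/2)*((p-1)*t^2) := bern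
            _ = 1 + p*(p-1)/2 * t^2 := by ring
      _ ≤ a^p * (((1+t) ^ p + (1-t) ^ p)/2) := mul_le_mul_of_nonneg_left key hap
      _ = (a^p * (1+t) ^ p + a^p * (1-t) ^ p)/2 := by ring
lemma bcl_scalar {p : ℝ} (hp : 1 < p) (hp2 : p ≤ 2) (a b : ℝ) :
    (a^2 + (p-1)*b^2) ^ (p/2) ≤ (|a+b| ^ p + |a-b| ^ p)/2 := by
  have key : ∀ A B : ℝ, 0 ≤ A → 0 ≤ B →
      (A^2+(p-1)*B^2)^(p/2) ≤ ((A+B)^p + |A-B|^p)/2 := by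
    intro A B hA hB
    rcases le_total B A with h|h
    · rw [abs_of_nonneg (by linarith)]; exact bcl_scalar_wlog hp hp2 hB h
    · rw [abs_of_nonpos (by linarith), show A+B = B+A by ring, show -(A-B) = B-A by ring]
      calc (A^2+(p-1)*B^2)^(p/2) ≤ (B^2+(p-1)*A^2)^(p/2) := by
            apply Real.rpow_le_rpow (add_nonneg (sq_nonneg A) (mul_nonneg (by linarith) (sq_nonneg B))) _ (by positivity)
            nlinarith [mul_nonneg (mul_nonneg (sub_nonneg.2 h) (by linarith : (0:ℝ) ≤ A+B)) (by linarith : (0:ℝ) ≤ 2-p)]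
        _ ≤ ((B+A)^p + (B-A)^p)/2 := bcl_scalar_wlog hp hp2 hA h
  have habs : |a+b| ^ p + |a-b| ^ p = (|a|+|b|)^p + (abs (|a| - |b|))^p := by
    rcases le_total 0 a with ha|ha <;> rcases le_total 0 b with hb|hb
    · rw [abs_of_nonneg ha, abs_of_nonneg hb, abs_of_nonneg (by linarith : (0:ℝ) ≤ a + b)]
    · rw [abs_of_nonneg ha, abs_of_nonpos hb]
      have h1 : |a-b| = a + -b := by rw [abs_of_nonneg (by linarith)]; ring
      have h2 : |a - -b| = |a+b| := by rw [sub_neg_eq_add]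
      rw [h1, h2]; exact add_comm _ _
    · rw [abs_of_nonpos ha, abs_of_nonneg hb]
      have h1 : |a-b| = -a + b := by rw [abs_of_nonpos (by linarith)]; ring
      have h2 : |-a - b| = |a+b| := by rw [show -a - b = -(a+b) by ring, abs_neg]
      rw [h1, h2]; exact add_comm _ _
    · rw [abs_of_nonpos ha, abs_of_nonpos hb]
      have h1 : |a+b| = -a + -b := by rw [abs_of_nonpos (by linarith)]; ring
      have h2 : |-a - -b| = |a-b| := by rw [show -a - -b = -(a-b) by ring, abs_neg]
      rw [h1, h2]
  rw [habs, ← sq_abs a, ← sq_abs b]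
  exact key _ _ (abs_nonneg a) (abs_nonneg b)

lemma rev_mink {ι : Type*} [Fintype ι] (u v : ι → ℝ) (hu : ∀ i, 0 ≤ u i) (hv : ∀ i, 0 ≤ v i)
    {r : ℝ} (hr0 : 0 < r) (hr1 : r ≤ 1) :
    (∑ i, u i ^ r) ^ (1/r) + (∑ i, v i ^ r) ^ (1/r) ≤ (∑ i, (u i + v i) ^ r) ^ (1/r) := by
  have hmono : ∀ w w' : ι → ℝ, (∀ i, 0 ≤ w i) → (∀ i, w i ≤ w' i) →
      (∑ i, w i ^ r) ^ (1/r) ≤ (∑ i, w' i ^ r) ^ (1/r) := by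
    intro w w' hw hle
    apply Real.rpow_le_rpow (Finset.sum_nonneg fun i _ => Real.rpow_nonneg (hw i) r) _ (by positivity)
    exact Finset.sum_le_sum fun i _ => Real.rpow_le_rpow (hw i) (hle i) hr0.le
  have hSA : (0:ℝ) ≤ ∑ i, u i ^ r := Finset.sum_nonneg fun i _ => Real.rpow_nonneg (hu i) r
  have hSB : (0:ℝ) ≤ ∑ i, v i ^ r := Finset.sum_nonneg fun i _ => Real.rpow_nonneg (hv i) r
  rcases eq_or_lt_of_le hSA with hA0 | hA0
  · rw [← hA0, Real.zero_rpow (by positivity), zero_add]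
    exact hmono v (fun i => u i + v i) hv (fun i => le_add_of_nonneg_left (hu i))
  rcases eq_or_lt_of_le hSB with hB0 | hB0
  · rw [← hB0, Real.zero_rpow (by positivity), add_zero]
    exact hmono u (fun i => u i + v i) hu (fun i => le_add_of_nonneg_right (hv i))
  set A := (∑ i, u i ^ r) ^ (1/r) with hAdef
  set B := (∑ i, v i ^ r) ^ (1/r) with hBdef
  have hApos : 0 < A := Real.rpow_pos_of_pos hA0 _
  have hBpos : 0 < B := Real.rpow_pos_of_pos hB0 _
  have hAr : A ^ r = ∑ i, u i ^ r := by
    rw [hAdef, ← Real.rpow_mul hSA, one_div, inv_mul_cancel₀ hr0.ne', Real.rpow_one]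
  have hBr : B ^ r = ∑ i, v i ^ r := by
    rw [hBdef, ← Real.rpow_mul hSB, one_div, inv_mul_cancel₀ hr0.ne', Real.rpow_one]
  have hsum : (A+B) ^ r ≤ ∑ i, (u i + v i) ^ r := by
    have conc := Real.concaveOn_rpow hr0.le hr1
    have hl : A/(A+B) + B/(A+B) = 1 := by field_simp
    have pointwise : ∀ i, (A/(A+B)) * (u i / A) ^ r + (B/(A+B)) * (v i / B) ^ r
        ≤ ((u i + v i)/(A+B)) ^ r := by
      intro i
      have := conc.2 (mem_Ici.2 (div_nonneg (hu i) hApos.le))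
        (mem_Ici.2 (div_nonneg (hv i) hBpos.le))
        (div_nonneg hApos.le (by linarith)) (div_nonneg hBpos.le (by linarith)) hl
      simp only [smul_eq_mul] at this
      refine this.trans_eq (congrArg (· ^ r) ?_)
      field_simp
    have hsum2 : ∑ i, ((u i + v i)/(A+B)) ^ r ≥ 1 := by
      calc ∑ i, ((u i + v i)/(A+B)) ^ r
          ≥ ∑ i, ((A/(A+B)) * (u i / A) ^ r + (B/(A+B)) * (v i / B) ^ r) :=
            Finset.sum_le_sum fun i _ => pointwise i
        _ = (A/(A+B)) * (∑ i, (u i / A) ^ r) + (B/(A+B)) * (∑ i, (v i / B) ^ r) := by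
            rw [Finset.sum_add_distrib, Finset.mul_sum, Finset.mul_sum]
        _ = 1 := by
            have e1 : ∑ i, (u i / A) ^ r = 1 := by
              simp_rw [Real.div_rpow (hu _) hApos.le]
              rw [← Finset.sum_div, ← hAr, div_self (by positivity)]
            have e2 : ∑ i, (v i / B) ^ r = 1 := by
              simp_rw [Real.div_rpow (hv _) hBpos.le]
              rw [← Finset.sum_div, ← hBr, div_self (by positivity)]
            rw [e1, e2, mul_one, mul_one, hl]
    have : ∑ i, ((u i + v i)/(A+B)) ^ r = (∑ i, (u i + v i) ^ r) / (A+B) ^ r := by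
      simp_rw [Real.div_rpow (add_nonneg (hu _) (hv _)) (by linarith : (0:ℝ) ≤ A+B)]
      rw [← Finset.sum_div]
    rw [this, ge_iff_le, le_div_iff₀ (by positivity), one_mul] at hsum2
    exact hsum2
  calc A + B = ((A+B) ^ r) ^ (1/r) := by
        rw [← Real.rpow_mul (by positivity), mul_one_div, div_self hr0.ne', Real.rpow_one]
    _ ≤ (∑ i, (u i + v i) ^ r) ^ (1/r) :=
        Real.rpow_le_rpow (by positivity) hsum (by positivity)

lemma power_mean {p : ℝ} (hp : 1 < p) (hp2 : p ≤ 2) {A B : ℝ} (hA : 0 ≤ A) (hB : 0 ≤ B) :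
    ((A ^ p + B ^ p)/2) ^ (2/p) ≤ (A^2 + B^2)/2 := by
  have hp0 : (0:ℝ) < p := by linarith
  have hconv := convexOn_rpow (p := 2/p) (by rw [le_div_iff₀ hp0]; linarith)
  have := hconv.2 (mem_Ici.2 (Real.rpow_nonneg hA p)) (mem_Ici.2 (Real.rpow_nonneg hB p))
    (by norm_num : (0:ℝ) ≤ 1/2) (by norm_num : (0:ℝ) ≤ 1/2) (by norm_num)
  simp only [smul_eq_mul] at this
  have e : ∀ C : ℝ, 0 ≤ C → (C ^ p) ^ (2/p) = C ^ 2 := by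
    intro C hC
    rw [← Real.rpow_natCast C 2, ← Real.rpow_mul hC, mul_div_cancel₀ _ hp0.ne']
    norm_num
  calc ((A ^ p + B ^ p)/2) ^ (2/p) = (1/2 * A^p + 1/2 * B^p) ^ (2/p) := by ring_nf
    _ ≤ 1/2 * (A^p)^(2/p) + 1/2 * (B^p)^(2/p) := this
    _ = (A^2 + B^2)/2 := by rw [e A hA, e B hB]; ring

/-- for `p ∈ (1,2]`, the space `ℓ_p^d` is 2-uniformly convex with
constant `p - 1` (Ball–Carlen–Lieb):
`‖(x+y)/2‖_p² + (p-1)‖(x-y)/2‖_p² ≤ (‖x‖_p² + ‖y‖_p²)/2`. -/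
theorem lp_two_uniform_convexity (d : ℕ) (p : ℝ)
    [Fact (1 ≤ ENNReal.ofReal p)] (hp : 1 < p) (hp2 : p ≤ 2)
    (x y : PiLp (ENNReal.ofReal p) (fun _ : Fin d => ℝ)) :
    ‖(2⁻¹ : ℝ) • (x + y)‖ ^ 2 + (p - 1) * ‖(2⁻¹ : ℝ) • (x - y)‖ ^ 2
      ≤ (‖x‖ ^ 2 + ‖y‖ ^ 2) / 2 := by
  have hp0 : (0:ℝ) < p := by linarith
  have htR : (ENNReal.ofReal p).toReal = p := ENNReal.toReal_ofReal hp0.le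
  have hns : ∀ z : PiLp (ENNReal.ofReal p) (fun _ : Fin d => ℝ),
      ‖z‖ = (∑ i, |z i| ^ p) ^ (1/p) := by
    intro z
    rw [PiLp.norm_eq_sum (by rw [htR]; exact hp0) z]
    simp [htR, Real.norm_eq_abs]
  set u := (2⁻¹ : ℝ) • (x + y) with hu
  set v := (2⁻¹ : ℝ) • (x - y) with hv
  have huv1 : ∀ i, u i + v i = x i := by
    intro i; simp [hu, hv, PiLp.smul_apply, PiLp.add_apply, PiLp.sub_apply, smul_eq_mul]; ring
  have huv2 : ∀ i, u i - v i = y i := by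
    intro i; simp [hu, hv, PiLp.smul_apply, PiLp.add_apply, PiLp.sub_apply, smul_eq_mul]; ring
  set r := p/2 with hr
  have hr0 : (0:ℝ) < r := by rw [hr]; linarith
  have hr1 : r ≤ 1 := by rw [hr]; linarith
  have h1r : 1/r = 2/p := by rw [hr]; field_simp
  -- sums
  set Su := ∑ i, |u i| ^ p with hSu
  set Sv := ∑ i, |v i| ^ p with hSv
  have hSu0 : 0 ≤ Su := Finset.sum_nonneg fun i _ => Real.rpow_nonneg (abs_nonneg _) _
  have hSv0 : 0 ≤ Sv := Finset.sum_nonneg fun i _ => Real.rpow_nonneg (abs_nonneg _) _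
  -- squared norms as 1/r powers
  have hsq : ∀ (z : PiLp (ENNReal.ofReal p) (fun _ : Fin d => ℝ)),
      ‖z‖ ^ 2 = (∑ i, |z i| ^ p) ^ (2/p) := by
    intro z
    have h0 : 0 ≤ ∑ i, |z i| ^ p := Finset.sum_nonneg fun i _ => Real.rpow_nonneg (abs_nonneg _) _
    rw [hns z, ← Real.rpow_natCast ((∑ i, |z i| ^ p) ^ (1/p)) 2, ← Real.rpow_mul h0]
    norm_num
    rw [show p⁻¹ * 2 = 2/p by ring]
  -- pointwise rpow identities
  have hUrw : ∀ w : Fin d → ℝ, ∀ i, ((w i)^2) ^ r = |w i| ^ p := by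
    intro w i
    rw [← sq_abs, ← Real.rpow_natCast |w i| 2, ← Real.rpow_mul (abs_nonneg _), hr]
    norm_num
    rw [show 2 * (p/2) = p by ring]
  -- Step 1: reverse Minkowski
  have step1 : ‖u‖^2 + (p-1) * ‖v‖^2
      ≤ (∑ i, ((u i)^2 + (p-1)*(v i)^2) ^ r) ^ (1/r) := by
    have hU : ∀ i, 0 ≤ (u i)^2 := fun i => sq_nonneg _
    have hV : ∀ i, 0 ≤ (p-1)*(v i)^2 := fun i => mul_nonneg (by linarith) (sq_nonneg _)
    have key := rev_mink (fun i => (u i)^2) (fun i => (p-1)*(v i)^2) hU hV hr0 hr1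
    have e1 : (∑ i, ((u i)^2) ^ r) ^ (1/r) = ‖u‖^2 := by
      rw [hsq u, h1r]
      congr 1
      exact Finset.sum_congr rfl fun i _ => hUrw u i
    have e2 : (∑ i, ((p-1)*(v i)^2) ^ r) ^ (1/r) = (p-1) * ‖v‖^2 := by
      have : ∀ i, ((p-1)*(v i)^2) ^ r = (p-1)^r * ((v i)^2) ^ r := fun i =>
        Real.mul_rpow (by linarith) (sq_nonneg _)
      simp_rw [this]
      rw [← Finset.mul_sum, Real.mul_rpow (Real.rpow_nonneg (by linarith) _)
        (Finset.sum_nonneg fun i _ => Real.rpow_nonneg (sq_nonneg _) _),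
        ← Real.rpow_mul (by linarith : (0:ℝ) ≤ p - 1), mul_one_div, div_self hr0.ne',
        Real.rpow_one, hsq v, h1r]
      congr 2
      exact Finset.sum_congr rfl fun i _ => hUrw v i
    rw [← e1, ← e2]
    exact key
  -- Step 2: pointwise scalar inequality
  have step2 : (∑ i, ((u i)^2 + (p-1)*(v i)^2) ^ r) ^ (1/r)
      ≤ ((‖x‖ ^ p + ‖y‖ ^ p)/2) ^ (2/p) := by
    rw [h1r]
    apply Real.rpow_le_rpow
      (Finset.sum_nonneg fun i _ => Real.rpow_nonneg
        (add_nonneg (sq_nonneg _) (mul_nonneg (by linarith) (sq_nonneg _))) _)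
      _ (by positivity)
    have hxp : ‖x‖ ^ p = ∑ i, |x i| ^ p := by
      rw [hns x, ← Real.rpow_mul (Finset.sum_nonneg fun i _ =>
        Real.rpow_nonneg (abs_nonneg _) _), one_div, inv_mul_cancel₀ hp0.ne', Real.rpow_one]
    have hyp : ‖y‖ ^ p = ∑ i, |y i| ^ p := by
      rw [hns y, ← Real.rpow_mul (Finset.sum_nonneg fun i _ =>
        Real.rpow_nonneg (abs_nonneg _) _), one_div, inv_mul_cancel₀ hp0.ne', Real.rpow_one]
    rw [hxp, hyp]
    calc ∑ i, ((u i)^2 + (p-1)*(v i)^2) ^ r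
        ≤ ∑ i, (|x i| ^ p + |y i| ^ p)/2 := by
          apply Finset.sum_le_sum
          intro i _
          have := bcl_scalar hp hp2 (u i) (v i)
          rw [huv1 i, huv2 i] at this
          exact this
      _ = ((∑ i, |x i| ^ p) + ∑ i, |y i| ^ p)/2 := by
          rw [← Finset.sum_add_distrib, ← Finset.sum_div]
  -- Step 3: power mean
  have step3 : ((‖x‖ ^ p + ‖y‖ ^ p)/2) ^ (2/p) ≤ (‖x‖^2 + ‖y‖^2)/2 :=
    power_mean hp hp2 (norm_nonneg x) (norm_nonneg y)
  linarith [step1, step2, step3]
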